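/- In the product model, if Âᵢ ⊆ 𝒜ᵢ is an MVE-algebra for (𝒳ᵢ, 𝒜ᵢ, {P_{θᵢ}}) for i = 1, 2, then the product σ-algebra Â₁ ⊗ Â₂ is an MVE-algebra for the product family {P_{θ₁} × P_{θ₂} : (θ₁, θ₂) ∈ Θ₁ × Θ₂}. -/

import Mathlib

open MeasureTheory ProbabilityTheory

lemma sq_lintegral_le {α : Type*} [mα : MeasurableSpace α] (μ : Measure α) [IsProbabilityMeasure μ]
    {f : α → ENNReal} (hf : AEMeasurable f μ) :
    (∫⁻ x, f x ∂μ) ^ 2 ≤ ∫⁻ x, f x ^ 2 ∂μ := by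
  have hpq : (2:ℝ).HolderConjugate 2 := ⟨by norm_num, by norm_num, by norm_num⟩
  have h := ENNReal.lintegral_mul_le_Lp_mul_Lq μ hpq hf (aemeasurable_const (b := (1:ENNReal)))
  simp only [Pi.mul_apply, mul_one, ENNReal.one_rpow, lintegral_const, measure_univ, one_mul,
    ENNReal.one_rpow] at h
  have h2 : (∫⁻ x, f x ∂μ) ^ 2 ≤ ((∫⁻ x, f x ^ (2:ℝ) ∂μ) ^ (1/(2:ℝ))) ^ 2 :=
    pow_le_pow_left' h 2
  refine h2.trans_eq ?_
  rw [← ENNReal.rpow_natCast _ 2, ← ENNReal.rpow_mul]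
  norm_num

lemma memLp_integrable_mul {α : Type*} [mα : MeasurableSpace α] {μ : Measure α} {f g : α → ℝ}
    (hf : MemLp f 2 μ) (hg : MemLp g 2 μ) : Integrable (fun x => f x * g x) μ := by
  have h : MemLp (f • g) 1 μ := hg.smul hf
  rw [← memLp_one_iff_integrable]
  exact h

lemma var_expand {α : Type*} [mα : MeasurableSpace α] {μ : Measure α} [IsProbabilityMeasure μ]
    {g χ : α → ℝ} (hg : MemLp g 2 μ) (hχ : MemLp χ 2 μ) (hχ0 : ∫ x, χ x ∂μ = 0) :
    variance (fun x => g x + χ x) μ =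
      variance g μ + 2 * ∫ x, g x * χ x ∂μ + ∫ x, χ x ^ 2 ∂μ := by
  have hgi : Integrable g μ := hg.integrable one_le_two
  have hχi : Integrable χ μ := hχ.integrable one_le_two
  have hg2 : Integrable (fun x => g x ^ 2) μ := hg.integrable_sq
  have hχ2 : Integrable (fun x => χ x ^ 2) μ := hχ.integrable_sq
  have hgχ : Integrable (fun x => g x * χ x) μ := memLp_integrable_mul (mα := mα) hg hχ
  have hsum : MemLp (fun x => g x + χ x) 2 μ := hg.add hχ
  rw [variance_eq_sub hsum, variance_eq_sub hg]
  simp only [Pi.pow_apply]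
  have e1 : ∫ x, (g x + χ x) ∂μ = ∫ x, g x ∂μ := by
    rw [integral_add hgi hχi, hχ0, add_zero]
  have e2 : ∫ x, (g x + χ x) ^ 2 ∂μ
      = ∫ x, g x ^ 2 ∂μ + (2 * ∫ x, g x * χ x ∂μ + ∫ x, χ x ^ 2 ∂μ) := by
    have e0 : ∫ x, (g x + χ x) ^ 2 ∂μ
        = ∫ x, (g x ^ 2 + (2 * (g x * χ x) + χ x ^ 2)) ∂μ := by
      congr 1; ext x; ring
    have hI : Integrable (fun x => 2 * (g x * χ x) + χ x ^ 2) μ :=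
      (hgχ.const_mul 2).add hχ2
    rw [e0, integral_add hg2 hI,
      integral_add (hgχ.const_mul 2) hχ2, integral_const_mul]
  rw [e1, e2]
  ring
/-- `χ` is a square-integrable unbiased estimator of zero for the family `P`. -/
def IsUEZero {𝓧 Θ : Type*} [MeasurableSpace 𝓧] (P : Θ → Measure 𝓧) (χ : 𝓧 → ℝ) : Prop :=
  Measurable χ ∧ (∀ θ, MemLp χ 2 (P θ)) ∧ ∀ θ, ∫ x, χ x ∂P θ = 0

/-- `g` is a UMVUE: minimal variance at every `θ` among all unbiased estimators
(with finite second moments) of the same parametric function. -/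
def IsUMVUE {𝓧 Θ : Type*} [MeasurableSpace 𝓧] (P : Θ → Measure 𝓧) (g : 𝓧 → ℝ) : Prop :=
  Measurable g ∧ (∀ θ, MemLp g 2 (P θ)) ∧
    ∀ g' : 𝓧 → ℝ, Measurable g' → (∀ θ, MemLp g' 2 (P θ)) →
      (∀ θ, ∫ x, g' x ∂P θ = ∫ x, g x ∂P θ) →
      ∀ θ, variance g (P θ) ≤ variance g' (P θ)

/-- A sub-σ-algebra `𝓐` of the basic σ-algebra `m` is an MVE-algebra for the family `P`
if every `𝓐`-measurable statistic with finite second moments under every `P θ`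
is a UMVUE of its expectation. -/
def IsMVEAlgebra {𝓧 Θ : Type*} [m : MeasurableSpace 𝓧] (P : Θ → Measure 𝓧)
    (𝓐 : MeasurableSpace 𝓧) : Prop :=
  𝓐 ≤ m ∧
    ∀ g : 𝓧 → ℝ, Measurable[𝓐] g → (∀ θ, MemLp g 2 (P θ)) → @IsUMVUE 𝓧 Θ m P g

section Ortho
variable {𝓧 Θ : Type*} [m : MeasurableSpace 𝓧] {P : Θ → Measure 𝓧}
  [hP : ∀ θ, IsProbabilityMeasure (P θ)]

/-- Forward direction: an MVE-algebra statistic is orthogonal to every UE of zero. -/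
lemma mve_orth {𝓐 : MeasurableSpace 𝓧} (h : @IsMVEAlgebra 𝓧 Θ m P 𝓐) {g : 𝓧 → ℝ}
    (hgm : Measurable[𝓐] g)
    (hg2 : ∀ θ, MemLp g 2 (P θ)) {χ : 𝓧 → ℝ} (hχ : @IsUEZero 𝓧 Θ m P χ) (θ : Θ) :
    ∫ x, g x * χ x ∂P θ = 0 := by
  obtain ⟨hle, hA⟩ := h
  obtain ⟨hgm', hg2', hmin⟩ := hA g hgm hg2
  obtain ⟨hχm, hχ2, hχ0⟩ := hχ
  set C := ∫ x, g x * χ x ∂P θ with hC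
  set D := ∫ x, χ x ^ 2 ∂P θ with hD
  have hDnn : 0 ≤ D := integral_nonneg fun x => sq_nonneg _
  have key : ∀ t : ℝ, 0 ≤ 2 * (t * C) + t ^ 2 * D := by
    intro t
    have hmem : ∀ θ', MemLp (fun x => g x + t * χ x) 2 (P θ') := fun θ' =>
      (hg2 θ').add ((hχ2 θ').const_mul t)
    have hmean : ∀ θ', ∫ x, (g x + t * χ x) ∂P θ' = ∫ x, g x ∂P θ' := by
      intro θ'
      rw [integral_add ((hg2 θ').integrable one_le_two)
        (((hχ2 θ').integrable one_le_two).const_mul t), integral_const_mul, hχ0 θ',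
        mul_zero, add_zero]
    have hv := hmin (fun x => g x + t * χ x)
      (hgm'.add (measurable_const.mul hχm)) hmem hmean θ
    have hvx : variance (fun x => g x + t * χ x) (P θ)
        = variance g (P θ) + 2 * (t * C) + t ^ 2 * D := by
      have := var_expand (mα := m) (hg2 θ) ((hχ2 θ).const_mul t)
        (by rw [integral_const_mul, hχ0 θ, mul_zero])
      rw [this]
      have e1 : ∫ x, g x * (t * χ x) ∂P θ = t * C := by
        rw [hC, ← integral_const_mul]
        congr 1; ext x; ring
      have e2 : ∫ x, (t * χ x) ^ 2 ∂P θ = t ^ 2 * D := by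
        rw [hD, ← integral_const_mul]
        congr 1; ext x; ring
      rw [e1, e2]
    rw [hvx] at hv
    linarith
  have h1 := key (-C / (D + 1))
  have h2 : (0:ℝ) < D + 1 := by linarith
  have h1' : 0 ≤ (2 * (-C / (D + 1) * C) + (-C / (D + 1)) ^ 2 * D) * (D + 1) ^ 2 :=
    mul_nonneg h1 (by positivity)
  have h3 : (2 * (-C / (D + 1) * C) + (-C / (D + 1)) ^ 2 * D) * (D + 1) ^ 2
      = C ^ 2 * (-(D + 2)) := by
    field_simp
    ring
  rw [h3] at h1'
  nlinarith [sq_nonneg C]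

/-- Backward direction: orthogonality to all UEs of zero gives UMVUE. -/
lemma orth_umvue {g : 𝓧 → ℝ} (hgm : Measurable g) (hg2 : ∀ θ, MemLp g 2 (P θ))
    (horth : ∀ χ : 𝓧 → ℝ, IsUEZero P χ → ∀ θ, ∫ x, g x * χ x ∂P θ = 0) :
    IsUMVUE P g := by
  refine ⟨hgm, hg2, fun g' hgm' hg2' hmean θ => ?_⟩
  have hχ : IsUEZero P (fun x => g' x - g x) :=
    ⟨hgm'.sub hgm, fun θ' => (hg2' θ').sub (hg2 θ'), fun θ' => by
      rw [integral_sub ((hg2' θ').integrable one_le_two) ((hg2 θ').integrable one_le_two),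
        hmean θ', sub_self]⟩
  have hsub : MemLp (fun x => g' x - g x) 2 (P θ) := (hg2' θ).sub (hg2 θ)
  have hv := var_expand (mα := m) (hg2 θ) hsub (hχ.2.2 θ)
  have he : (fun x => g x + (g' x - g x)) = g' := by ext x; ring
  rw [he] at hv
  rw [hv, horth _ hχ θ]
  have : 0 ≤ ∫ x, (g' x - g x) ^ 2 ∂P θ := integral_nonneg fun x => sq_nonneg _
  linarith

end Ortho

lemma memLp2_integral_prod {α β : Type*} [mα : MeasurableSpace α] [mβ : MeasurableSpace β]
    (μ : Measure α) (ν : Measure β) [IsProbabilityMeasure μ] [IsProbabilityMeasure ν]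
    {f : α × β → ℝ} (hf : Measurable f) (h2 : MemLp f 2 (μ.prod ν)) :
    MemLp (fun x => ∫ y, f (x, y) ∂ν) 2 μ := by
  have hsm : StronglyMeasurable (fun x => ∫ y, f (x, y) ∂ν) :=
    hf.stronglyMeasurable.integral_prod_right'
  rw [memLp_two_iff_integrable_sq hsm.aestronglyMeasurable]
  refine ⟨(hsm.measurable.pow_const 2).aestronglyMeasurable, ?_⟩
  have hfin : ∫⁻ z, (‖f z‖₊ : ENNReal) ^ 2 ∂(μ.prod ν) < ⊤ := by
    have h := h2.integrable_sq.hasFiniteIntegral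
    rw [hasFiniteIntegral_def] at h
    simpa [nnnorm_pow, enorm_eq_nnnorm] using h
  rw [hasFiniteIntegral_def]
  calc ∫⁻ x, (‖(∫ y, f (x, y) ∂ν) ^ 2‖₊ : ENNReal) ∂μ
      = ∫⁻ x, (‖∫ y, f (x, y) ∂ν‖₊ : ENNReal) ^ 2 ∂μ := by
        simp [nnnorm_pow]
    _ ≤ ∫⁻ x, (∫⁻ y, (‖f (x, y)‖₊ : ENNReal) ∂ν) ^ 2 ∂μ :=
        lintegral_mono fun x => pow_le_pow_left' (enorm_integral_le_lintegral_enorm _) 2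
    _ ≤ ∫⁻ x, (∫⁻ y, (‖f (x, y)‖₊ : ENNReal) ^ 2 ∂ν) ∂μ := by
        refine lintegral_mono fun x => sq_lintegral_le (mα := mβ) ν ?_
        exact (hf.comp measurable_prodMk_left).enorm.aemeasurable
    _ = ∫⁻ z, (‖f z‖₊ : ENNReal) ^ 2 ∂(μ.prod ν) := by
        rw [lintegral_prod]
        exact (hf.enorm.pow_const 2).aemeasurable
    _ < ⊤ := hfin

/-- The product σ-algebra of two sub-σ-algebras, with explicit arguments. -/
abbrev prodSigma {𝓧₁ 𝓧₂ : Type*} (a : MeasurableSpace 𝓧₁) (b : MeasurableSpace 𝓧₂) :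
    MeasurableSpace (𝓧₁ × 𝓧₂) := @Prod.instMeasurableSpace 𝓧₁ 𝓧₂ a b

theorem stmt10_aux {𝓧₁ 𝓧₂ Θ₁ Θ₂ : Type*}
    (𝓐₁ : MeasurableSpace 𝓧₁) (𝓐₂ : MeasurableSpace 𝓧₂)
    [m₁ : MeasurableSpace 𝓧₁] [m₂ : MeasurableSpace 𝓧₂]
    (P₁ : Θ₁ → Measure 𝓧₁) (P₂ : Θ₂ → Measure 𝓧₂)
    [∀ θ, IsProbabilityMeasure (P₁ θ)] [∀ θ, IsProbabilityMeasure (P₂ θ)]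
    (h₁ : @IsMVEAlgebra 𝓧₁ Θ₁ m₁ P₁ 𝓐₁) (h₂ : @IsMVEAlgebra 𝓧₂ Θ₂ m₂ P₂ 𝓐₂) :
    @IsMVEAlgebra (𝓧₁ × 𝓧₂) (Θ₁ × Θ₂) (@Prod.instMeasurableSpace 𝓧₁ 𝓧₂ m₁ m₂)
      (fun p : Θ₁ × Θ₂ => @MeasureTheory.Measure.prod 𝓧₁ 𝓧₂ m₁ m₂ (P₁ p.1) (P₂ p.2))
      (@Prod.instMeasurableSpace 𝓧₁ 𝓧₂ 𝓐₁ 𝓐₂) := by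
  haveI hPP : ∀ p : Θ₁ × Θ₂, IsProbabilityMeasure ((P₁ p.1).prod (P₂ p.2)) := fun p => by
    infer_instance
  have hle : prodSigma 𝓐₁ 𝓐₂ ≤ prodSigma m₁ m₂ := by
    refine sup_le ?_ ?_
    · exact le_trans (MeasurableSpace.comap_mono h₁.1) le_sup_left
    · exact le_trans (MeasurableSpace.comap_mono h₂.1) le_sup_right
  refine ⟨hle, ?_⟩
  intro g hgm hg2
  refine orth_umvue (hgm.mono hle le_rfl) hg2 ?_
  rintro χ hχ ⟨θ₁, θ₂⟩
  obtain ⟨hχm, hχ2, hχ0⟩ := hχ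
  set μ := (P₁ θ₁).prod (P₂ θ₂) with hμdef
  have hχint : Integrable χ μ := (hχ2 (θ₁, θ₂)).integrable one_le_two
  -- Step 1: the set integral of χ vanishes on every measurable set of the sub-product-algebra.
  have hset : ∀ s : Set (𝓧₁ × 𝓧₂), MeasurableSet[prodSigma 𝓐₁ 𝓐₂] s →
      ∫ z in s, χ z ∂μ = 0 := by
    intro s hs
    refine @MeasurableSpace.induction_on_inter (𝓧₁ × 𝓧₂) (prodSigma 𝓐₁ 𝓐₂)
      (fun s _ => ∫ z in s, χ z ∂μ = 0) _
      (@generateFrom_prod 𝓧₁ 𝓧₂ 𝓐₁ 𝓐₂).symm (@isPiSystem_prod 𝓧₁ 𝓧₂ 𝓐₁ 𝓐₂)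
      (by simp) ?_ ?_ ?_ s hs
    · -- rectangles
      rintro t ⟨A₁, hA₁, A₂, hA₂, rfl⟩
      have hA₁' : MeasurableSet[m₁] A₁ := h₁.1 _ hA₁
      have hA₂' : MeasurableSet[m₂] A₂ := h₂.1 _ hA₂
      set F : 𝓧₁ × 𝓧₂ → ℝ := fun z => Set.indicator A₁ (fun _ => (1:ℝ)) z.1 * χ z with hFdef
      have hFeq : F = (A₁ ×ˢ (Set.univ : Set 𝓧₂)).indicator χ := by
        ext z
        by_cases h : z.1 ∈ A₁ <;>
          simp [hFdef, Set.indicator_apply, h, Set.mem_prod]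
      have hFmeas : Measurable F :=
        ((measurable_const.indicator hA₁').comp measurable_fst).mul hχm
      have hFmem : ∀ p : Θ₁ × Θ₂, MemLp F 2 ((P₁ p.1).prod (P₂ p.2)) := by
        intro p
        rw [hFeq]
        exact (hχ2 p).indicator (hA₁'.prod MeasurableSet.univ)
      set w : 𝓧₂ → ℝ := fun x₂ => ∫ x₁, F (x₁, x₂) ∂(P₁ θ₁) with hwdef
      have hwmeas : Measurable w :=
        (hFmeas.stronglyMeasurable.integral_prod_left').measurable
      have hw2 : ∀ θ₂'', MemLp w 2 (P₂ θ₂'') := by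
        intro θ₂''
        have hmapeq : Measure.map Prod.swap ((P₂ θ₂'').prod (P₁ θ₁)) = (P₁ θ₁).prod (P₂ θ₂'') :=
          Measure.prod_swap
        have ha : AEStronglyMeasurable F (Measure.map Prod.swap ((P₂ θ₂'').prod (P₁ θ₁))) := by
          rw [hmapeq]; exact (hFmem (θ₁, θ₂'')).aestronglyMeasurable
        have hswap : MemLp (F ∘ Prod.swap) 2 ((P₂ θ₂'').prod (P₁ θ₁)) := by
          refine (memLp_map_measure_iff ha measurable_swap.aemeasurable).mp ?_
          rw [hmapeq]; exact hFmem (θ₁, θ₂'')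
        exact memLp2_integral_prod (P₂ θ₂'') (P₁ θ₁)
          (hFmeas.comp measurable_swap) hswap
      have hw0 : ∀ θ₂'', ∫ x₂, w x₂ ∂(P₂ θ₂'') = 0 := by
        intro θ₂''
        set u : 𝓧₁ → ℝ := fun x₁ => ∫ x₂, χ (x₁, x₂) ∂(P₂ θ₂'') with hudef
        have hu : @IsUEZero 𝓧₁ Θ₁ m₁ P₁ u := by
          refine ⟨(hχm.stronglyMeasurable.integral_prod_right').measurable, ?_, ?_⟩
          · exact fun θ₁'' => memLp2_integral_prod (P₁ θ₁'') (P₂ θ₂'') hχm (hχ2 (θ₁'', θ₂''))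
          · intro θ₁''
            rw [hudef, ← integral_prod χ ((hχ2 (θ₁'', θ₂'')).integrable one_le_two)]
            exact hχ0 (θ₁'', θ₂'')
        have horthA := mve_orth h₁ (g := Set.indicator A₁ (fun _ => (1:ℝ)))
          (measurable_const.indicator hA₁)
          (fun θ' => (memLp_const (1:ℝ)).indicator hA₁') hu θ₁
        have hswapF := integral_integral_swap
          (f := fun x₁ x₂ => F (x₁, x₂)) (μ := P₁ θ₁) (ν := P₂ θ₂'')
          ((hFmem (θ₁, θ₂'')).integrable one_le_two)
        calc ∫ x₂, w x₂ ∂(P₂ θ₂'')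
            = ∫ x₁, ∫ x₂, F (x₁, x₂) ∂(P₂ θ₂'') ∂(P₁ θ₁) := hswapF.symm
          _ = ∫ x₁, Set.indicator A₁ (fun _ => (1:ℝ)) x₁ * u x₁ ∂(P₁ θ₁) := by
              congr 1; ext x₁
              rw [hudef, ← integral_const_mul]
          _ = 0 := horthA
      have hwUE : @IsUEZero 𝓧₂ Θ₂ m₂ P₂ w := ⟨hwmeas, hw2, hw0⟩
      have horthB := mve_orth h₂ (g := Set.indicator A₂ (fun _ => (1:ℝ)))
        (measurable_const.indicator hA₂)
        (fun θ' => (memLp_const (1:ℝ)).indicator hA₂') hwUE θ₂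
      have hind : Integrable ((A₁ ×ˢ A₂).indicator χ) μ :=
        hχint.indicator (hA₁'.prod hA₂')
      calc ∫ z in A₁ ×ˢ A₂, χ z ∂μ
          = ∫ z, (A₁ ×ˢ A₂).indicator χ z ∂μ :=
            (integral_indicator (hA₁'.prod hA₂')).symm
        _ = ∫ x₂, ∫ x₁, (A₁ ×ˢ A₂).indicator χ (x₁, x₂) ∂(P₁ θ₁) ∂(P₂ θ₂) :=
            integral_prod_symm _ hind
        _ = ∫ x₂, Set.indicator A₂ (fun _ => (1:ℝ)) x₂ * w x₂ ∂(P₂ θ₂) := by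
            congr 1; ext x₂
            rw [← integral_const_mul]
            congr 1; ext x₁
            by_cases h1 : x₁ ∈ A₁ <;> by_cases h2 : x₂ ∈ A₂ <;>
              simp [Set.indicator_apply, Set.mem_prod, h1, h2, hFdef]
        _ = 0 := horthB
    · -- complements
      intro t htm ht
      have hadd := integral_add_compl (hle _ htm) hχint
      have htot : ∫ z, χ z ∂μ = 0 := hχ0 (θ₁, θ₂)
      linarith
    · -- disjoint unions
      intro f hdisj hmeas hC
      rw [integral_iUnion (fun i => hle _ (hmeas i)) hdisj hχint.integrableOn]
      simp [hC]
  -- Step 2: conditional expectation of χ w.r.t. the sub-algebra vanishes.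
  haveI : SigmaFinite (μ.trim hle) := by
    haveI : IsFiniteMeasure (μ.trim hle) := isFiniteMeasure_trim hle
    infer_instance
  have hcond : (fun _ => (0:ℝ)) =ᵐ[μ] μ[χ | prodSigma 𝓐₁ 𝓐₂] := by
    refine ae_eq_condExp_of_forall_setIntegral_eq hle hχint
      (fun s _ _ => (integrable_zero _ _ _).integrableOn)
      (fun s hs _ => by rw [hset s hs]; simp) ?_
    exact StronglyMeasurable.aestronglyMeasurable stronglyMeasurable_const
  have hg_sm : StronglyMeasurable[prodSigma 𝓐₁ 𝓐₂] g := hgm.stronglyMeasurable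
  have hgχ_int : Integrable (fun z => g z * χ z) μ :=
    memLp_integrable_mul (hg2 (θ₁, θ₂)) (hχ2 (θ₁, θ₂))
  have hmul : μ[g * χ | prodSigma 𝓐₁ 𝓐₂] =ᵐ[μ] g * μ[χ | prodSigma 𝓐₁ 𝓐₂] :=
    condExp_mul_of_stronglyMeasurable_left hg_sm hgχ_int hχint
  have hzero : μ[g * χ | prodSigma 𝓐₁ 𝓐₂] =ᵐ[μ] (fun _ => (0:ℝ)) := by
    filter_upwards [hmul, hcond] with z hz1 hz2
    simp [hz1, ← hz2]
  calc ∫ z, g z * χ z ∂μ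
      = ∫ z, (μ[g * χ | prodSigma 𝓐₁ 𝓐₂]) z ∂μ := (integral_condExp hle).symm
    _ = ∫ z, (fun _ => (0:ℝ)) z ∂μ := integral_congr_ae hzero
    _ = 0 := by simp

theorem stmt10 {𝓧₁ 𝓧₂ Θ₁ Θ₂ : Type*}
    [m₁ : MeasurableSpace 𝓧₁] [m₂ : MeasurableSpace 𝓧₂]
    (P₁ : Θ₁ → Measure 𝓧₁) (P₂ : Θ₂ → Measure 𝓧₂)
    [∀ θ, IsProbabilityMeasure (P₁ θ)] [∀ θ, IsProbabilityMeasure (P₂ θ)]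
    (𝓐₁ : MeasurableSpace 𝓧₁) (𝓐₂ : MeasurableSpace 𝓧₂)
    (h₁ : @IsMVEAlgebra 𝓧₁ Θ₁ m₁ P₁ 𝓐₁) (h₂ : @IsMVEAlgebra 𝓧₂ Θ₂ m₂ P₂ 𝓐₂) :
    @IsMVEAlgebra (𝓧₁ × 𝓧₂) (Θ₁ × Θ₂) (@Prod.instMeasurableSpace 𝓧₁ 𝓧₂ m₁ m₂)
      (fun p : Θ₁ × Θ₂ => @MeasureTheory.Measure.prod 𝓧₁ 𝓧₂ m₁ m₂ (P₁ p.1) (P₂ p.2))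
      (@Prod.instMeasurableSpace 𝓧₁ 𝓧₂ 𝓐₁ 𝓐₂) :=
  @stmt10_aux 𝓧₁ 𝓧₂ Θ₁ Θ₂ 𝓐₁ 𝓐₂ m₁ m₂ P₁ P₂ _ _ h₁ h₂
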